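/- In PG(2,q) with q even and q ≥ 8, if H is a regular hyperoval (an irreducible conic together with its nucleus), then there is a unique point p ∈ H such that H \ {p} is an irreducible conic. -/

import Mathlib

open Projectivization

/-- The set of points of `PG(n-1,F)` lying on a subspace `W`. -/
def pointsOn {F : Type*} [Field F] {n : ℕ} (W : Submodule F (Fin n → F)) :
    Set (Projectivization F (Fin n → F)) :=
  {p | p.submodule ≤ W}

/-- An arc of `PG(2,q)`: every line contains at most two of its points. -/
def IsArc {F : Type*} [Field F] (X : Set (Projectivization F (Fin 3 → F))) : Prop :=
  ∀ W : Submodule F (Fin 3 → F), Module.finrank F W = 2 → (X ∩ pointsOn W).ncard ≤ 2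

/-- A hyperoval of `PG(2,q)`: a set of `q+2` points, no three collinear. -/
def IsHyperoval {F : Type*} [Field F] (q : ℕ)
    (H : Set (Projectivization F (Fin 3 → F))) : Prop :=
  H.ncard = q + 2 ∧ IsArc H

/-- An irreducible conic of `PG(2,q)`: the zero set of a quadratic form,
consisting of `q+1` points, no three collinear. -/
def IsConic {F : Type*} [Field F] (q : ℕ)
    (C : Set (Projectivization F (Fin 3 → F))) : Prop :=
  (∃ Q : QuadraticForm F (Fin 3 → F), C = {p | Q p.rep = 0}) ∧
    C.ncard = q + 1 ∧ IsArc C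

section Aux
variable {F : Type*} [Field F]

private lemma quadExpand (Q : QuadraticForm F (Fin 3 → F)) (v w : Fin 3 → F) (s t : F) :
    Q (s • v + t • w)
      = s * s * Q v + t * t * Q w + s * t * QuadraticMap.polar Q v w := by
  have h : QuadraticMap.polar Q (s • v) (t • w)
      = Q (s • v + t • w) - Q (s • v) - Q (t • w) := rfl
  rw [QuadraticMap.polar_smul_left, QuadraticMap.polar_smul_right, Q.map_smul, Q.map_smul] at h
  simp only [smul_eq_mul] at h
  linear_combination -h

private lemma quadExpand3 (Q : QuadraticForm F (Fin 3 → F)) (v w u : Fin 3 → F) (s t r : F) :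
    Q (s • v + t • w + r • u)
      = s * s * Q v + t * t * Q w + r * r * Q u
        + s * t * QuadraticMap.polar Q v w + s * r * QuadraticMap.polar Q v u
        + t * r * QuadraticMap.polar Q w u := by
  have h : QuadraticMap.polar Q (s • v + t • w) (r • u)
      = Q (s • v + t • w + r • u) - Q (s • v + t • w) - Q (r • u) := rfl
  rw [QuadraticMap.polar_add_left, QuadraticMap.polar_smul_left, QuadraticMap.polar_smul_left,
    QuadraticMap.polar_smul_right, QuadraticMap.polar_smul_right, Q.map_smul,
    quadExpand Q v w s t] at h
  simp only [smul_eq_mul] at h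
  linear_combination -h

private lemma lineVanish {Q : QuadraticForm F (Fin 3 → F)} {v w : Fin 3 → F} {α β : F}
    (hv : Q v = 0) (hw : Q w = 0) (hα : α ≠ 0) (hβ : β ≠ 0)
    (hx : Q (α • v + β • w) = 0) (s t : F) : Q (s • v + t • w) = 0 := by
  have h := quadExpand Q v w α β
  rw [hx, hv, hw] at h
  have h2 : α * β * QuadraticMap.polar Q v w = 0 := by linear_combination -h
  have hp : QuadraticMap.polar Q v w = 0 :=
    (mul_eq_zero.1 h2).resolve_left (mul_ne_zero hα hβ)
  rw [quadExpand, hv, hw, hp]; ring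

private lemma repPairIndep {a b : Projectivization F (Fin 3 → F)} (h : a ≠ b) :
    LinearIndependent F ![a.rep, b.rep] := by
  have h2 := (Projectivization.independent_pair_iff_ne a b).2 h
  rw [Projectivization.independent_iff] at h2
  have : (Projectivization.rep ∘ ![a, b]) = ![a.rep, b.rep] := by
    funext i; fin_cases i <;> rfl
  rwa [this] at h2

private lemma memPointsOn {W : Submodule F (Fin 3 → F)} {x : Projectivization F (Fin 3 → F)} :
    x ∈ pointsOn W ↔ x.rep ∈ W := by
  rw [pointsOn, Set.mem_setOf_eq, Projectivization.submodule_eq,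
    Submodule.span_singleton_le_iff_mem]

/-- No three distinct points of an arc are collinear. -/
private lemma arcThree {H : Set (Projectivization F (Fin 3 → F))} (hfin : H.Finite)
    (harc : IsArc H) {a b x : Projectivization F (Fin 3 → F)}
    (ha : a ∈ H) (hb : b ∈ H) (hx : x ∈ H) (hab : a ≠ b) (hxa : x ≠ a) (hxb : x ≠ b)
    (hmem : x.rep ∈ Submodule.span F {a.rep, b.rep}) : False := by
  set W : Submodule F (Fin 3 → F) := Submodule.span F {a.rep, b.rep} with hW
  have hrank : Module.finrank F W = 2 := by
    have hi := repPairIndep hab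
    have := finrank_span_eq_card hi
    rw [show Set.range ![a.rep, b.rep] = {a.rep, b.rep} by
      simp only [Matrix.range_cons, Matrix.range_empty, Set.union_empty,
        Set.union_singleton]; exact Set.pair_comm _ _] at this
    simpa using this
  have hsub : ({a, b, x} : Set _) ⊆ H ∩ pointsOn W := by
    intro y hy
    rcases hy with rfl | rfl | rfl
    · exact ⟨ha, memPointsOn.2 (Submodule.subset_span (by simp))⟩
    · exact ⟨hb, memPointsOn.2 (Submodule.subset_span (by simp))⟩
    · exact ⟨hx, memPointsOn.2 hmem⟩
  have h3 : ({a, b, x} : Set _).ncard = 3 := by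
    rw [Set.ncard_insert_of_notMem (by simp [hab, hxa.symm]) (Set.toFinite _),
      Set.ncard_pair (by exact fun h => hxb h.symm)]
  have hle := Set.ncard_le_ncard hsub (hfin.inter_of_left _)
  have := harc W hrank
  omega

/-- A third point on a line through two distinct points decomposes with
nonzero coefficients. -/
private lemma repComb {a b x : Projectivization F (Fin 3 → F)} (hab : a ≠ b)
    (hxa : x ≠ a) (hxb : x ≠ b)
    (hx : x.rep ∈ Submodule.span F {a.rep, b.rep}) :
    ∃ s t : F, s ≠ 0 ∧ t ≠ 0 ∧ x.rep = s • a.rep + t • b.rep := by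
  obtain ⟨s, t, hst⟩ := Submodule.mem_span_pair.1 hx
  refine ⟨s, t, ?_, ?_, hst.symm⟩
  · rintro rfl
    have ht : t ≠ 0 := by
      rintro rfl; simp at hst; exact x.rep_nonzero hst.symm
    apply hxb
    rw [← x.mk_rep, ← b.mk_rep]
    rw [Projectivization.mk_eq_mk_iff]
    exact ⟨Units.mk0 t ht, by simp [← hst]⟩
  · rintro rfl
    have hs : s ≠ 0 := by
      rintro rfl; simp at hst; exact x.rep_nonzero hst.symm
    apply hxa
    rw [← x.mk_rep, ← a.mk_rep]
    rw [Projectivization.mk_eq_mk_iff]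
    exact ⟨Units.mk0 s hs, by simp [← hst]⟩

private lemma peel {X : Type*} {S : Set X} {n : ℕ} (h : n + 1 ≤ S.ncard) :
    ∃ a ∈ S, n ≤ (S \ {a}).ncard := by
  have hfin : S.Finite := Set.finite_of_ncard_ne_zero (by omega)
  obtain ⟨a, ha⟩ := Set.nonempty_of_ncard_ne_zero (s := S) (by omega)
  have h2 := Set.ncard_diff_singleton_of_mem ha
  exact ⟨a, ha, by omega⟩

private lemma collinearOfRel {a b x : Projectivization F (Fin 3 → F)} {β γ δ : F}
    (hβ : β ≠ 0) (hrel : β • x.rep + γ • a.rep + δ • b.rep = 0) :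
    x.rep ∈ Submodule.span F {a.rep, b.rep} := by
  refine Submodule.mem_span_pair.2 ⟨-γ / β, -δ / β, ?_⟩
  apply smul_right_injective (Fin 3 → F) hβ
  show β • ((-γ / β) • a.rep + (-δ / β) • b.rep) = β • x.rep
  rw [smul_add, smul_smul, smul_smul]
  have e1 : β * (-γ / β) = -γ := by rw [mul_comm]; exact div_mul_cancel₀ (-γ) hβ
  have e2 : β * (-δ / β) = -δ := by rw [mul_comm]; exact div_mul_cancel₀ (-δ) hβ
  rw [e1, e2]
  linear_combination (norm := module) (-1 : F) • hrel

end Aux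

/-- If `H` is a regular hyperoval of `PG(2,q)`, `q` even, `q ≥ 8` (a conic plus
its nucleus), then there is a unique point `p ∈ H` with `H \ {p}` a conic. -/
theorem regular_hyperoval_unique_conic_point
    (F : Type*) [Field F] [Fintype F] (q : ℕ) (hq : q = Fintype.card F)
    (hqeven : Even q) (hq8 : 8 ≤ q)
    (H : Set (Projectivization F (Fin 3 → F))) (hH : IsHyperoval q H)
    (hreg : ∃ p ∈ H, IsConic q (H \ {p})) :
    ∃! p, p ∈ H ∧ IsConic q (H \ {p}) := by
  obtain ⟨p, hp, hpc⟩ := hreg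
  refine ⟨p, ⟨hp, hpc⟩, ?_⟩
  rintro p' ⟨hp', hpc'⟩
  by_contra hne
  obtain ⟨hHcard, harcH⟩ := hH
  have hHfin : H.Finite := Set.finite_of_ncard_ne_zero (by rw [hHcard]; omega)
  obtain ⟨⟨Q, hQ⟩, hC1, _⟩ := hpc
  obtain ⟨⟨Q', hQ'⟩, _, _⟩ := hpc'
  have hCz : ∀ x ∈ H \ {p}, Q x.rep = 0 := fun x hx => by rw [hQ] at hx; exact hx
  have hCz' : ∀ x ∈ H \ {p'}, Q' x.rep = 0 := fun x hx => by rw [hQ'] at hx; exact hx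
  -- the set of common points
  set S : Set (Projectivization F (Fin 3 → F)) := (H \ {p}) \ {p'} with hS
  have hmemS : ∀ x ∈ S, x ∈ H ∧ Q x.rep = 0 ∧ Q' x.rep = 0 := by
    intro x hx
    obtain ⟨⟨hxH, hxp⟩, hxp'⟩ := hx
    exact ⟨hxH, hCz x ⟨hxH, hxp⟩, hCz' x ⟨hxH, hxp'⟩⟩
  have hpmem : p' ∈ H \ {p} := ⟨hp', by simp only [Set.mem_singleton_iff]; exact hne⟩
  have hScard : 5 ≤ S.ncard := by
    rw [hS, Set.ncard_diff_singleton_of_mem hpmem, hC1]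
    omega
  -- extract five distinct points of S
  obtain ⟨a, haS, h4⟩ := peel hScard
  obtain ⟨b, hbS, h3⟩ := peel h4
  obtain ⟨c, hcS, h2⟩ := peel h3
  obtain ⟨d, hdS, h1⟩ := peel h2
  obtain ⟨e, heS, -⟩ := peel h1
  obtain ⟨⟨⟨hdS', hda⟩, hdb⟩, hdc⟩ := hdS
  obtain ⟨⟨hcS', hca⟩, hcb⟩ := hcS
  obtain ⟨hbS', hba⟩ := hbS
  obtain ⟨⟨⟨⟨heS', hea⟩, heb⟩, hec⟩, hed⟩ := heS
  simp only [Set.mem_diff, Set.mem_singleton_iff] at hda hdb hdc hca hcb hba hed hec heb hea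
  obtain ⟨haH, haQ, haQ'⟩ := hmemS a haS
  obtain ⟨hbH, hbQ, hbQ'⟩ := hmemS b hbS'
  obtain ⟨hcH, hcQ, hcQ'⟩ := hmemS c hcS'
  obtain ⟨hdH, hdQ, hdQ'⟩ := hmemS d hdS'
  obtain ⟨heH, heQ, heQ'⟩ := hmemS e heS'
  have hab : a ≠ b := fun h => hba h.symm
  have hcd : c ≠ d := fun h => hdc h.symm
  have iab := repPairIndep hab
  have icd := repPairIndep hcd
  -- the third point f = mk (a.rep + b.rep) on line ab
  have hvf : a.rep + b.rep ≠ 0 := by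
    intro h0
    have := (LinearIndependent.pair_iff.1 iab 1 1 (by rw [one_smul, one_smul]; exact h0)).1
    exact one_ne_zero this
  set fpt := Projectivization.mk F (a.rep + b.rep) hvf with hfpt
  obtain ⟨uf, huf⟩ := Projectivization.exists_smul_eq_mk_rep F (a.rep + b.rep) hvf
  have hfa : fpt ≠ a := by
    intro h
    rw [hfpt] at h
    have h2 : Projectivization.mk F (a.rep + b.rep) hvf
        = Projectivization.mk F a.rep a.rep_nonzero := by rw [a.mk_rep]; exact h
    obtain ⟨u, hu⟩ := (Projectivization.mk_eq_mk_iff F _ _ _ _).1 h2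
    rw [Units.smul_def] at hu
    have := LinearIndependent.pair_iff.1 iab ((u : F) - 1) (-1)
      (by linear_combination (norm := module) hu)
    simpa using this.2
  have hfb : fpt ≠ b := by
    intro h
    rw [hfpt] at h
    have h2 : Projectivization.mk F (a.rep + b.rep) hvf
        = Projectivization.mk F b.rep b.rep_nonzero := by rw [b.mk_rep]; exact h
    obtain ⟨u, hu⟩ := (Projectivization.mk_eq_mk_iff F _ _ _ _).1 h2
    rw [Units.smul_def] at hu
    have := LinearIndependent.pair_iff.1 iab (-1) ((u : F) - 1)
      (by linear_combination (norm := module) hu)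
    simpa using this.1
  have hfmem : fpt.rep ∈ Submodule.span F {a.rep, b.rep} :=
    Submodule.mem_span_pair.2 ⟨(uf : F), (uf : F), by
      rw [← huf, Units.smul_def, smul_add]⟩
  -- Q' does not vanish at f
  have hQ'f : Q' (a.rep + b.rep) ≠ 0 := by
    intro h0
    have hrep : Q' fpt.rep = 0 := by
      rw [← huf, Units.smul_def, Q'.map_smul, h0, smul_zero]
    have hfH : fpt ∈ H := by
      have : fpt ∈ H \ {p'} := by rw [hQ']; exact hrep
      exact this.1
    exact arcThree hHfin harcH haH hbH hfH hab hfa hfb hfmem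
  have hQf : Q (a.rep + b.rep) ≠ 0 := by
    intro h0
    have hrep : Q fpt.rep = 0 := by
      rw [← huf, Units.smul_def, Q.map_smul, h0, smul_zero]
    have hfH : fpt ∈ H := by
      have : fpt ∈ H \ {p} := by rw [hQ]; exact hrep
      exact this.1
    exact arcThree hHfin harcH haH hbH hfH hab hfa hfb hfmem
  -- the pencil conic Q'' vanishing on line ab
  set lam : F := -(Q (a.rep + b.rep)) / (Q' (a.rep + b.rep)) with hlamdef
  have hlam : lam ≠ 0 := div_ne_zero (neg_ne_zero.2 hQf) hQ'f
  set Q'' : QuadraticForm F (Fin 3 → F) := Q + lam • Q' with hQ''def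
  have hQ''app : ∀ x, Q'' x = Q x + lam * Q' x := by
    intro x; rw [hQ''def]; simp
  have hQ''a : Q'' a.rep = 0 := by rw [hQ''app, haQ, haQ']; ring
  have hQ''b : Q'' b.rep = 0 := by rw [hQ''app, hbQ, hbQ']; ring
  have hQ''c : Q'' c.rep = 0 := by rw [hQ''app, hcQ, hcQ']; ring
  have hQ''d : Q'' d.rep = 0 := by rw [hQ''app, hdQ, hdQ']; ring
  have hQ''e : Q'' e.rep = 0 := by rw [hQ''app, heQ, heQ']; ring
  have hQ''f : Q'' (a.rep + b.rep) = 0 := by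
    rw [hQ''app, hlamdef]; field_simp; ring
  have Lab : ∀ s t : F, Q'' (s • a.rep + t • b.rep) = 0 :=
    lineVanish hQ''a hQ''b one_ne_zero one_ne_zero
      (by rw [one_smul, one_smul]; exact hQ''f)
  -- a linear relation among the four reps
  have hnl : ¬ LinearIndependent F ![a.rep, b.rep, c.rep, d.rep] := by
    intro hl
    have := hl.fintype_card_le_finrank
    rw [Module.finrank_fin_fun] at this
    simp at this
  obtain ⟨k, hkrel, i0, hki0⟩ := Fintype.not_linearIndependent_iff.1 hnl
  simp only [Fin.sum_univ_four, Matrix.cons_val_zero, Matrix.cons_val_one, Matrix.head_cons,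
    Matrix.cons_val_two, Matrix.tail_cons, Matrix.cons_val_three] at hkrel
  -- all four coefficients are nonzero
  have hk0 : k 0 ≠ 0 := by
    intro h0
    by_cases h1 : k 1 = 0
    · rw [h0, h1] at hkrel
      have h23 := LinearIndependent.pair_iff.1 icd (k 2) (k 3)
        (by linear_combination (norm := module) hkrel)
      exact absurd (by fin_cases i0 <;> simp [h23.1, h23.2, h0, h1]) hki0
    · rw [h0] at hkrel
      exact arcThree hHfin harcH hcH hdH hbH hcd (fun h => hcb h.symm) (fun h => hdb h.symm)
        (collinearOfRel h1 (by linear_combination (norm := module) hkrel))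
  have hk1 : k 1 ≠ 0 := by
    intro h1
    by_cases h0 : k 0 = 0
    · rw [h0, h1] at hkrel
      have h23 := LinearIndependent.pair_iff.1 icd (k 2) (k 3)
        (by linear_combination (norm := module) hkrel)
      exact absurd (by fin_cases i0 <;> simp [h23.1, h23.2, h0, h1]) hki0
    · rw [h1] at hkrel
      exact arcThree hHfin harcH hcH hdH haH hcd (fun h => hca h.symm) (fun h => hda h.symm)
        (collinearOfRel h0 (by linear_combination (norm := module) hkrel))
  have hk2 : k 2 ≠ 0 := by
    intro h2'
    by_cases h3' : k 3 = 0
    · rw [h2', h3'] at hkrel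
      have h01 := LinearIndependent.pair_iff.1 iab (k 0) (k 1)
        (by linear_combination (norm := module) hkrel)
      exact absurd (by fin_cases i0 <;> simp [h01.1, h01.2, h2', h3']) hki0
    · rw [h2'] at hkrel
      exact arcThree hHfin harcH haH hbH hdH hab hda hdb
        (collinearOfRel h3' (by linear_combination (norm := module) hkrel))
  have hk3 : k 3 ≠ 0 := by
    intro h3'
    by_cases h2' : k 2 = 0
    · rw [h2', h3'] at hkrel
      have h01 := LinearIndependent.pair_iff.1 iab (k 0) (k 1)
        (by linear_combination (norm := module) hkrel)
      exact absurd (by fin_cases i0 <;> simp [h01.1, h01.2, h2', h3']) hki0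
    · rw [h3'] at hkrel
      exact arcThree hHfin harcH haH hbH hcH hab hca hcb
        (collinearOfRel h2' (by linear_combination (norm := module) hkrel))
  -- the intersection vector of lines ab and cd
  set v0 : Fin 3 → F := k 0 • a.rep + k 1 • b.rep with hv0
  have hv0cd : v0 = (-(k 2)) • c.rep + (-(k 3)) • d.rep := by
    rw [hv0]; linear_combination (norm := module) hkrel
  have hQ''v0 : Q'' v0 = 0 := by rw [hv0]; exact Lab _ _
  have Lcd : ∀ s t : F, Q'' (s • c.rep + t • d.rep) = 0 :=
    lineVanish hQ''c hQ''d (neg_ne_zero.2 hk2) (neg_ne_zero.2 hk3)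
      (by rw [← hv0cd]; exact hQ''v0)
  -- vanishing of polar forms
  have hpav0 : QuadraticMap.polar Q'' a.rep v0 = 0 := by
    have hsum : Q'' (a.rep + v0) = 0 := by
      have h : a.rep + v0 = (1 + k 0) • a.rep + k 1 • b.rep := by
        rw [hv0]; module
      rw [h]; exact Lab _ _
    have hdefn : QuadraticMap.polar Q'' a.rep v0
        = Q'' (a.rep + v0) - Q'' a.rep - Q'' v0 := rfl
    rw [hdefn, hsum, hQ''a, hQ''v0]; ring
  have hpcv0 : QuadraticMap.polar Q'' c.rep v0 = 0 := by
    have hsum : Q'' (c.rep + v0) = 0 := by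
      have h : c.rep + v0 = (1 - k 2) • c.rep + (-(k 3)) • d.rep := by
        rw [hv0cd]; module
      rw [h]; exact Lcd _ _
    have hdefn : QuadraticMap.polar Q'' c.rep v0
        = Q'' (c.rep + v0) - Q'' c.rep - Q'' v0 := rfl
    rw [hdefn, hsum, hQ''c, hQ''v0]; ring
  -- (a.rep, c.rep, v0) is a basis
  have hind3 : LinearIndependent F ![a.rep, c.rep, v0] := by
    rw [Fintype.linearIndependent_iff]
    intro g hg
    simp only [Fin.sum_univ_three, Matrix.cons_val_zero, Matrix.cons_val_one, Matrix.head_cons,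
      Matrix.cons_val_two, Matrix.tail_cons] at hg
    rw [hv0] at hg
    have hg1 : g 1 = 0 := by
      by_contra h1
      exact arcThree hHfin harcH haH hbH hcH hab hca hcb
        (collinearOfRel h1 (show g 1 • c.rep + (g 0 + g 2 * k 0) • a.rep
          + (g 2 * k 1) • b.rep = 0 by linear_combination (norm := module) hg))
    rw [hg1] at hg
    have h02 := LinearIndependent.pair_iff.1 iab (g 0 + g 2 * k 0) (g 2 * k 1)
      (by linear_combination (norm := module) hg)
    have hg2 : g 2 = 0 := by
      rcases mul_eq_zero.1 h02.2 with h | h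
      · exact h
      · exact absurd h hk1
    have hg0 : g 0 = 0 := by
      have := h02.1; rw [hg2] at this; simpa using this
    intro i; fin_cases i <;> assumption
  have hspan : Submodule.span F (Set.range ![a.rep, c.rep, v0]) = ⊤ :=
    hind3.span_eq_top_of_card_eq_finrank (by rw [Module.finrank_fin_fun]; simp)
  have hdecomp : ∀ x : Fin 3 → F, ∃ cx : Fin 3 → F,
      cx 0 • a.rep + cx 1 • c.rep + cx 2 • v0 = x := by
    intro x
    have hx : x ∈ Submodule.span F (Set.range ![a.rep, c.rep, v0]) := by
      rw [hspan]; exact Submodule.mem_top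
    obtain ⟨cx, hcx⟩ := (Submodule.mem_span_range_iff_exists_fun F).1 hx
    refine ⟨cx, ?_⟩
    simpa [Fin.sum_univ_three] using hcx
  -- the last polar vanishes, using the fifth point e
  obtain ⟨cc, hcc⟩ := hdecomp e.rep
  have hcc0 : cc 0 ≠ 0 := by
    intro h0
    rw [h0] at hcc
    refine arcThree hHfin harcH hcH hdH heH hcd hec hed
      (collinearOfRel (show (-1 : F) ≠ 0 by norm_num)
        (show (-1 : F) • e.rep + (cc 1 - cc 2 * k 2) • c.rep
          + (-(cc 2 * k 3)) • d.rep = 0 from ?_))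
    rw [hv0] at hcc
    linear_combination (norm := module) hcc + (-(cc 2)) • hkrel
  have hcc1 : cc 1 ≠ 0 := by
    intro h1
    rw [h1] at hcc
    refine arcThree hHfin harcH haH hbH heH hab hea heb
      (collinearOfRel (show (-1 : F) ≠ 0 by norm_num)
        (show (-1 : F) • e.rep + (cc 0 + cc 2 * k 0) • a.rep
          + (cc 2 * k 1) • b.rep = 0 from ?_))
    rw [hv0] at hcc
    linear_combination (norm := module) hcc
  have hpac : QuadraticMap.polar Q'' a.rep c.rep = 0 := by
    have hexp := quadExpand3 Q'' a.rep c.rep v0 (cc 0) (cc 1) (cc 2)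
    rw [hcc, hQ''e, hQ''a, hQ''c, hQ''v0, hpav0, hpcv0] at hexp
    have h01 : cc 0 * cc 1 * QuadraticMap.polar Q'' a.rep c.rep = 0 := by
      linear_combination -hexp
    rcases mul_eq_zero.1 h01 with h | h
    · rcases mul_eq_zero.1 h with h' | h'
      · exact absurd h' hcc0
      · exact absurd h' hcc1
    · exact h
  -- hence Q'' vanishes identically
  have hzero : ∀ x : Fin 3 → F, Q'' x = 0 := by
    intro x
    obtain ⟨cx, hcx⟩ := hdecomp x
    rw [← hcx, quadExpand3, hQ''a, hQ''c, hQ''v0, hpav0, hpcv0, hpac]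
    ring
  -- so the two conics coincide: contradiction
  have hiff : ∀ x : Projectivization F (Fin 3 → F), Q x.rep = 0 ↔ Q' x.rep = 0 := by
    intro x
    have hz := hzero x.rep
    rw [hQ''app] at hz
    constructor
    · intro h; rw [h] at hz
      have : lam * Q' x.rep = 0 := by linear_combination hz
      rcases mul_eq_zero.1 this with h' | h'
      · exact absurd h' hlam
      · exact h'
    · intro h; rw [h] at hz; simpa using hz
  have hseteq : H \ {p} = H \ {p'} := by
    rw [hQ, hQ']
    ext x
    exact hiff x
  have : p' ∈ H \ {p} := hpmem
  rw [hseteq] at this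
  exact this.2 rfl
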